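/- Let 1 ≤ l ≤ n be integers and r ∈ ℚ[x_1,...,x_l] a polynomial, viewed in ℚ[x_1,...,x_n]. Then the Vandermonde polynomial V divides ũ_n in ℚ[x_1,...,x_n], and the quotient polynomial R̃_n = ũ_n / V has total degree at most deg r. -/

import Mathlib

open MvPolynomial Finset

/-- The Vandermonde polynomial `V = ∏_{1 ≤ i < j ≤ n} (x_i - x_j)`. -/
noncomputable def vand (n : ℕ) : MvPolynomial (Fin n) ℚ :=
  ∏ p ∈ Finset.univ.filter (fun p : Fin n × Fin n => p.1 < p.2), (X p.1 - X p.2)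

/-- `∏_{1 ≤ i ≤ l, i < j ≤ n} (x_i + x_j)`. -/
noncomputable def prodPlus (n l : ℕ) : MvPolynomial (Fin n) ℚ :=
  ∏ p ∈ Finset.univ.filter (fun p : Fin n × Fin n => (p.1 : ℕ) < l ∧ p.1 < p.2),
    (X p.1 + X p.2)

/-- `∏_{l < i < j ≤ n} (x_i - x_j)`. -/
noncomputable def prodMinus (n l : ℕ) : MvPolynomial (Fin n) ℚ :=
  ∏ p ∈ Finset.univ.filter (fun p : Fin n × Fin n => l ≤ (p.1 : ℕ) ∧ p.1 < p.2),
    (X p.1 - X p.2)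

/-- The signed symmetrization `∑_{ω ∈ S(n)} sgn(ω) · f(x_{ω(1)}, …, x_{ω(n)})`. -/
noncomputable def antiSum (n : ℕ) (f : MvPolynomial (Fin n) ℚ) : MvPolynomial (Fin n) ℚ :=
  ∑ ω : Equiv.Perm (Fin n), ((Equiv.Perm.sign ω : ℤ) : ℚ) • rename (⇑ω) f

lemma prime_X_gen {σ : Type*} [DecidableEq σ] (i : σ) :
    Prime (X i : MvPolynomial σ ℚ) := by
  let e : MvPolynomial σ ℚ ≃ₐ[ℚ] Polynomial (MvPolynomial {b : σ // b ≠ i} ℚ) :=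
    (renameEquiv ℚ (Equiv.optionSubtypeNe i).symm).trans (optionEquivLeft ℚ _)
  have he : e (X i) = Polynomial.X := by
    simp [e, renameEquiv_apply, rename_X, Equiv.optionSubtypeNe_symm_self,
      optionEquivLeft_X_none]
  rw [← MulEquiv.prime_iff e.toRingEquiv.toMulEquiv]
  rw [show e.toRingEquiv.toMulEquiv (X i) = e (X i) from rfl, he]
  exact Polynomial.prime_X

lemma prime_X_sub_X {σ : Type*} [DecidableEq σ] {i j : σ} (h : i ≠ j) :
    Prime (X i - X j : MvPolynomial σ ℚ) := by
  let f : σ → MvPolynomial σ ℚ := fun k => if k = j then X i - X k else X k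
  let F : MvPolynomial σ ℚ →ₐ[ℚ] MvPolynomial σ ℚ := aeval f
  have hFF : F.comp F = AlgHom.id ℚ _ := by
    apply MvPolynomial.algHom_ext
    intro k
    by_cases hk : k = j
    · subst hk
      simp [F, f, aeval_X, h, if_neg (Ne.symm h)]
    · simp [F, f, aeval_X, hk]
  let e : MvPolynomial σ ℚ ≃ₐ[ℚ] MvPolynomial σ ℚ := AlgEquiv.ofAlgHom F F hFF hFF
  have he : e (X j) = X i - X j := by
    simp [e, F, f, aeval_X]
  rw [show (X i - X j : MvPolynomial σ ℚ) = e.toRingEquiv.toMulEquiv (X j) from he.symm,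
    MulEquiv.prime_iff e.toRingEquiv.toMulEquiv]
  exact prime_X_gen j


lemma rename_antiSum (n : ℕ) (σ : Equiv.Perm (Fin n)) (f : MvPolynomial (Fin n) ℚ) :
    rename ⇑σ (antiSum n f) = ((Equiv.Perm.sign σ : ℤ) : ℚ) • antiSum n f := by
  unfold antiSum
  rw [map_sum, Finset.smul_sum]
  refine Fintype.sum_equiv (Equiv.mulLeft σ) _ _ fun ω => ?_
  rw [map_smul, rename_rename]
  have h1 : (⇑σ ∘ ⇑ω) = ⇑(Equiv.mulLeft σ ω) := rfl
  rw [h1, smul_smul]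
  congr 1
  have : Equiv.Perm.sign (Equiv.mulLeft σ ω) = Equiv.Perm.sign σ * Equiv.Perm.sign ω := by
    simp [Equiv.Perm.sign_mul]
  rw [this]
  push_cast
  ring_nf
  have hs : ((Equiv.Perm.sign σ : ℤ) : ℚ) ^ 2 = 1 := by
    rcases Int.units_eq_one_or (Equiv.Perm.sign σ) with h | h <;> simp [h]
  rw [hs]; ring

lemma dvd_sub_rename_diag {n : ℕ} (i j : Fin n) (p : MvPolynomial (Fin n) ℚ) :
    (X i - X j : MvPolynomial (Fin n) ℚ) ∣
      (p - rename (fun k => if k = j then i else k) p) := by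
  set g : Fin n → Fin n := fun k => if k = j then i else k with hg
  induction p using MvPolynomial.induction_on with
  | C a => simp [rename_C]
  | add p q hp hq =>
      have : p + q - rename g (p + q) = (p - rename g p) + (q - rename g q) := by
        rw [map_add]; ring
      rw [this]; exact dvd_add hp hq
  | mul_X p k hp =>
      have hmap : rename g (p * X k) = rename g p * X (g k) := by
        rw [map_mul, rename_X]
      have key : p * X k - rename g (p * X k)
          = (p - rename g p) * X k + rename g p * (X k - X (g k)) := by
        rw [hmap]; ring
      rw [key]
      refine dvd_add (Dvd.dvd.mul_right hp _) (Dvd.dvd.mul_left ?_ _)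
      by_cases hk : k = j
      · subst hk
        simp only [hg, if_pos rfl]
        exact ⟨-1, by ring⟩
      · simp [hg, hk]

lemma X_sub_X_dvd_antiSum {n : ℕ} {i j : Fin n} (hij : i ≠ j)
    (f : MvPolynomial (Fin n) ℚ) :
    (X i - X j : MvPolynomial (Fin n) ℚ) ∣ antiSum n f := by
  set g : Fin n → Fin n := fun k => if k = j then i else k with hg
  have hzero : rename g (antiSum n f) = 0 := by
    have hswap := rename_antiSum n (Equiv.swap i j) f
    rw [Equiv.Perm.sign_swap hij] at hswap
    have hcomp : g ∘ ⇑(Equiv.swap i j) = g := by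
      funext k
      by_cases hki : k = i
      · subst hki; simp [hg, Equiv.swap_apply_left, if_neg hij]
      · by_cases hkj : k = j
        · subst hkj; simp [hg, Equiv.swap_apply_right]
        · simp [hg, Equiv.swap_apply_of_ne_of_ne hki hkj]
    have h1 : rename g (rename (⇑(Equiv.swap i j)) (antiSum n f)) = rename g (antiSum n f) := by
      rw [rename_rename, hcomp]
    rw [hswap] at h1
    simp only [Int.cast_neg, Units.val_neg, Int.cast_one, Units.val_one, neg_smul, one_smul,
      map_neg] at h1
    have h2 : (2 : ℚ) • rename g (antiSum n f) = 0 := by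
      rw [two_smul]
      calc (rename g) (antiSum n f) + (rename g) (antiSum n f)
          = -(rename g) (antiSum n f) + (rename g) (antiSum n f) := by rw [h1]
        _ = 0 := by ring
    have h3 := congrArg (fun y => (2:ℚ)⁻¹ • y) h2
    simpa [smul_smul] using h3
  have := dvd_sub_rename_diag i j (antiSum n f)
  rwa [hzero, sub_zero] at this

lemma not_dvd_X_sub_X {n : ℕ} {p q : Fin n × Fin n} (hp : p.1 < p.2) (hq : q.1 < q.2)
    (hpq : p ≠ q) :
    ¬ (X p.1 - X p.2 : MvPolynomial (Fin n) ℚ) ∣ (X q.1 - X q.2) := by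
  intro hdvd
  -- find a coordinate of q not in {p.1, p.2}
  have hkey : (q.1 ≠ p.1 ∧ q.1 ≠ p.2) ∨ (q.2 ≠ p.1 ∧ q.2 ≠ p.2) := by
    by_contra hc
    push_neg at hc
    obtain ⟨h1, h2⟩ := hc
    rcases eq_or_ne q.1 p.1 with ha | ha
    · rcases eq_or_ne q.2 p.2 with hb | hb
      · exact hpq (Prod.ext_iff.mpr ⟨ha, hb⟩).symm
      · have hq2 : q.2 = p.1 := by
          rcases eq_or_ne q.2 p.1 with h | h
          · exact h
          · exact absurd (h2 h) hb
        exact absurd (ha.trans hq2.symm) (ne_of_lt hq)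
    · have hq1 : q.1 = p.2 := h1 ha
      rcases eq_or_ne q.2 p.1 with hb | hb
      · have : p.2 < p.1 := by rw [← hq1, ← hb]; exact hq
        exact absurd (this.trans hp) (lt_irrefl _)
      · have hq2 : q.2 = p.2 := h2 hb
        exact absurd (hq1.trans hq2.symm) (ne_of_lt hq)
  rcases hkey with ⟨h1, h2⟩ | ⟨h1, h2⟩
  · set v : Fin n → ℚ := fun k => if k = q.1 then 1 else 0 with hv
    have h0 : eval v (X p.1 - X p.2 : MvPolynomial (Fin n) ℚ) = 0 := by
      simp [hv, if_neg (Ne.symm h1), if_neg (Ne.symm h2)]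
    have h1' : eval v (X q.1 - X q.2 : MvPolynomial (Fin n) ℚ) = 1 := by
      simp [hv, if_neg (ne_of_gt hq : q.2 ≠ q.1)]
    obtain ⟨c, hc⟩ := hdvd
    have := congrArg (eval v) hc
    rw [map_mul, h0, zero_mul] at this
    rw [this] at h1'
    norm_num at h1'
  · set v : Fin n → ℚ := fun k => if k = q.2 then 1 else 0 with hv
    have h0 : eval v (X p.1 - X p.2 : MvPolynomial (Fin n) ℚ) = 0 := by
      simp [hv, if_neg (Ne.symm h1), if_neg (Ne.symm h2)]
    have h1' : eval v (X q.1 - X q.2 : MvPolynomial (Fin n) ℚ) = -1 := by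
      simp [hv, if_neg (ne_of_lt hq : q.1 ≠ q.2)]
    obtain ⟨c, hc⟩ := hdvd
    have := congrArg (eval v) hc
    rw [map_mul, h0, zero_mul] at this
    rw [this] at h1'
    norm_num at h1'

lemma prod_primes_dvd' {α : Type*} [CommRing α] [IsDomain α] {ι : Type*} [DecidableEq ι]
    (f : ι → α) (m : α) :
    ∀ S : Finset ι, (∀ a ∈ S, Prime (f a)) → (∀ a ∈ S, f a ∣ m) →
      (∀ a ∈ S, ∀ b ∈ S, a ≠ b → ¬ f a ∣ f b) → (∏ a ∈ S, f a) ∣ m := by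
  intro S
  induction S using Finset.induction_on with
  | empty => simp
  | insert _ _ ha ih =>
    rename_i a S
    intro hprime hdvd hnd
    rw [Finset.prod_insert ha]
    obtain ⟨w, hw⟩ := ih (fun b hb => hprime b (Finset.mem_insert_of_mem hb))
      (fun b hb => hdvd b (Finset.mem_insert_of_mem hb))
      (fun b hb c hc hbc => hnd b (Finset.mem_insert_of_mem hb) c (Finset.mem_insert_of_mem hc) hbc)
    have hpa : Prime (f a) := hprime a (Finset.mem_insert_self a S)
    have hda : f a ∣ (∏ b ∈ S, f b) * w := hw ▸ hdvd a (Finset.mem_insert_self a S)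
    rcases hpa.dvd_mul.mp hda with h | h
    · obtain ⟨b, hb, hdvdb⟩ := hpa.exists_mem_finset_dvd h
      exact absurd hdvdb
        (hnd a (Finset.mem_insert_self a S) b (Finset.mem_insert_of_mem hb)
          (fun hab => ha (hab ▸ hb)))
    · obtain ⟨u, hu⟩ := h
      exact ⟨u, by rw [hw, hu]; ring⟩

lemma sum_eq_degree {σ : Type*} (d : σ →₀ ℕ) : (d.sum fun _ e => e) = d.degree := rfl

lemma homog_mul_totalDegree {σ : Type*} {A B : MvPolynomial σ ℚ} {m : ℕ}
    (hA : A.IsHomogeneous m) (hA0 : A ≠ 0) (hB0 : B ≠ 0) :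
    m + B.totalDegree ≤ (A * B).totalDegree := by
  classical
  set k := B.totalDegree with hk
  set q := homogeneousComponent k B with hqdef
  have hq0 : q ≠ 0 := by
    obtain ⟨d, hd, hdeq⟩ := Finset.exists_mem_eq_sup B.support
      (support_nonempty.mpr hB0) (fun s => s.sum fun _ e => e)
    intro hq
    have : coeff d q = coeff d B := by
      rw [hqdef, coeff_homogeneousComponent, if_pos]
      rw [← sum_eq_degree, ← hdeq, hk, totalDegree]
    rw [hq] at this
    exact (mem_support_iff.mp hd) this.symm
  have hAq0 : A * q ≠ 0 := mul_ne_zero hA0 hq0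
  have hAqhom : (A * q).IsHomogeneous (m + k) :=
    hA.mul (homogeneousComponent_isHomogeneous k B)
  obtain ⟨s, hs⟩ := support_nonempty.mpr hAq0
  have hsdeg : s.degree = m + k := by
    by_contra hne
    exact (mem_support_iff.mp hs) (hAqhom.coeff_eq_zero hne)
  have hcoeff : coeff s (A * B) = coeff s (A * q) := by
    conv_lhs => rw [← sum_homogeneousComponent B, Finset.mul_sum]
    rw [coeff_sum]
    rw [Finset.sum_eq_single k]
    · intro j hj hjk
      have : (A * homogeneousComponent j B).IsHomogeneous (m + j) :=
        hA.mul (homogeneousComponent_isHomogeneous j B)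
      exact this.coeff_eq_zero (by omega)
    · intro hkmem
      exact absurd (Finset.self_mem_range_succ k) hkmem
  have hmem : s ∈ (A * B).support := by
    rw [mem_support_iff, hcoeff]
    exact mem_support_iff.mp hs
  have := le_totalDegree hmem
  rwa [sum_eq_degree, hsdeg] at this

/-- the Vandermonde polynomial divides `ũ_n`, and the quotient `R̃_n` has
total degree at most `deg r`. -/
theorem vand_dvd_antiSum_and_totalDegree_le
    (n l : ℕ) (hl : 1 ≤ l) (hln : l ≤ n) (r : MvPolynomial (Fin l) ℚ) :
    ∃ Rtil : MvPolynomial (Fin n) ℚ,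
      vand n * Rtil =
        antiSum n (rename (Fin.castLE hln) r * prodPlus n l * prodMinus n l) ∧
      Rtil.totalDegree ≤ r.totalDegree := by
  classical
  set S : Finset (Fin n × Fin n) := Finset.univ.filter (fun p : Fin n × Fin n => p.1 < p.2)
    with hS
  set N := S.card with hN
  set f := rename (Fin.castLE hln) r * prodPlus n l * prodMinus n l with hf
  set u := antiSum n f with hu
  -- divisibility
  have hdvd : vand n ∣ u := by
    rw [vand]
    apply prod_primes_dvd' (fun p : Fin n × Fin n => (X p.1 - X p.2 : MvPolynomial (Fin n) ℚ)) u S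
    · intro p hp
      exact prime_X_sub_X (ne_of_lt (Finset.mem_filter.mp hp).2)
    · intro p hp
      exact X_sub_X_dvd_antiSum (ne_of_lt (Finset.mem_filter.mp hp).2) f
    · intro p hp q hq hpq
      exact not_dvd_X_sub_X (Finset.mem_filter.mp hp).2 (Finset.mem_filter.mp hq).2 hpq
  obtain ⟨Rtil, hRtil⟩ := hdvd
  refine ⟨Rtil, hRtil.symm, ?_⟩
  by_cases hR0 : Rtil = 0
  · simp [hR0]
  -- vand is homogeneous of degree N and nonzero
  have hVhom : (vand n).IsHomogeneous N := by
    rw [vand]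
    have := MvPolynomial.IsHomogeneous.prod S
      (fun p : Fin n × Fin n => (X p.1 - X p.2 : MvPolynomial (Fin n) ℚ)) (fun _ => 1)
      (fun p _ => (isHomogeneous_X ℚ p.1).sub (isHomogeneous_X ℚ p.2))
    simpa [hN, Finset.sum_const] using this
  have hV0 : vand n ≠ 0 := by
    rw [vand]
    exact Finset.prod_ne_zero_iff.mpr fun p hp =>
      (prime_X_sub_X (ne_of_lt (Finset.mem_filter.mp hp).2)).ne_zero
  -- degree bound on u
  have hcards : (Finset.univ.filter
        (fun p : Fin n × Fin n => (p.1 : ℕ) < l ∧ p.1 < p.2)).card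
      + (Finset.univ.filter
        (fun p : Fin n × Fin n => l ≤ (p.1 : ℕ) ∧ p.1 < p.2)).card = N := by
    rw [hN, hS]
    have e1 : Finset.univ.filter (fun p : Fin n × Fin n => (p.1 : ℕ) < l ∧ p.1 < p.2)
        = (Finset.univ.filter (fun p : Fin n × Fin n => p.1 < p.2)).filter
            (fun p => (p.1 : ℕ) < l) := by
      rw [Finset.filter_filter]
      congr 1
      funext p
      exact propext (by tauto)
    have e2 : Finset.univ.filter (fun p : Fin n × Fin n => l ≤ (p.1 : ℕ) ∧ p.1 < p.2)
        = (Finset.univ.filter (fun p : Fin n × Fin n => p.1 < p.2)).filter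
            (fun p => ¬ (p.1 : ℕ) < l) := by
      rw [Finset.filter_filter]
      congr 1
      funext p
      exact propext (by constructor <;> intro h <;> [exact ⟨h.2, not_lt.mpr h.1⟩; exact ⟨not_lt.mp h.2, h.1⟩])
    rw [e1, e2]
    exact Finset.card_filter_add_card_filter_not _
  have hdP1 : (prodPlus n l).totalDegree
      ≤ (Finset.univ.filter (fun p : Fin n × Fin n => (p.1 : ℕ) < l ∧ p.1 < p.2)).card := by
    refine (totalDegree_finset_prod _ _).trans ?_
    calc ∑ p ∈ _, (X p.1 + X p.2 : MvPolynomial (Fin n) ℚ).totalDegree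
        ≤ ∑ _p ∈ Finset.univ.filter (fun p : Fin n × Fin n => (p.1 : ℕ) < l ∧ p.1 < p.2), 1 :=
          Finset.sum_le_sum (fun p _ => (totalDegree_add _ _).trans
            (by simp [totalDegree_X]))
      _ = _ := by simp
  have hdP2 : (prodMinus n l).totalDegree
      ≤ (Finset.univ.filter (fun p : Fin n × Fin n => l ≤ (p.1 : ℕ) ∧ p.1 < p.2)).card := by
    refine (totalDegree_finset_prod _ _).trans ?_
    calc ∑ p ∈ _, (X p.1 - X p.2 : MvPolynomial (Fin n) ℚ).totalDegree
        ≤ ∑ _p ∈ Finset.univ.filter (fun p : Fin n × Fin n => l ≤ (p.1 : ℕ) ∧ p.1 < p.2), 1 :=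
          Finset.sum_le_sum (fun p _ => (totalDegree_sub _ _).trans
            (by simp [totalDegree_X]))
      _ = _ := by simp
  have hdf : f.totalDegree ≤ r.totalDegree + N := by
    rw [hf]
    calc (rename (Fin.castLE hln) r * prodPlus n l * prodMinus n l).totalDegree
        ≤ (rename (Fin.castLE hln) r * prodPlus n l).totalDegree
            + (prodMinus n l).totalDegree := totalDegree_mul _ _
      _ ≤ (rename (Fin.castLE hln) r).totalDegree + (prodPlus n l).totalDegree
            + (prodMinus n l).totalDegree := by
          exact Nat.add_le_add_right (totalDegree_mul _ _) _
      _ ≤ r.totalDegree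
          + (Finset.univ.filter (fun p : Fin n × Fin n => (p.1 : ℕ) < l ∧ p.1 < p.2)).card
          + (Finset.univ.filter (fun p : Fin n × Fin n => l ≤ (p.1 : ℕ) ∧ p.1 < p.2)).card := by
          gcongr
          exact totalDegree_rename_le _ _
      _ = r.totalDegree + N := by rw [add_assoc, hcards]
  have hdu : u.totalDegree ≤ r.totalDegree + N := by
    rw [hu, antiSum]
    refine totalDegree_finsetSum_le fun ω _ => ?_
    exact (totalDegree_smul_le _ _).trans ((totalDegree_rename_le _ _).trans hdf)
  have hkey := homog_mul_totalDegree hVhom hV0 hR0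
  rw [← hRtil] at hkey
  omega
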